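/- In the augmented layered graph with nonnegative edge weights, the minimum weight over all STARs for client c equals min_{p∈V} [SPW(s₁,p₁) + SPW(o₁',p₁') + w_{p₁p₂} + SPW(p₂,d₂)], and this minimum can be computed with three single-source shortest path computations (from s₁, from o₁', and from d₂ on the reversed graph) followed by a minimization over |V| processing locations. -/

import Mathlib

/-- Nodes of the augmented layered graph: live pipeline (layer 1), static pipeline
(layer 1), output pipeline (layer 2), and the super static source `o₁'`. -/
inductive ALGNode (V : Type*) where
  | live : V → ALGNode V
  | sta : V → ALGNode V
  | out : V → ALGNode V
  | src : ALGNode V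
deriving DecidableEq

/-- The total weight of a walk `[v₀, v₁, …, v_k]`: `Σ w(v_i, v_{i+1})`. -/
def pathWeight {N : Type*} (w : N → N → ℝ) : List N → ℝ
  | a :: b :: rest => w a b + pathWeight w (b :: rest)
  | _ => 0

/-- `IsWalk E u v l`: `l` is a directed walk from `u` to `v` along edges of `E`. -/
def IsWalk {N : Type*} (E : N → N → Prop) (u v : N) (l : List N) : Prop :=
  l.Chain' E ∧ l.head? = some u ∧ l.getLast? = some v

/-- Shortest-path weight from `u` to `v` in the weighted graph. -/
noncomputable def SPW {N : Type*} (E : N → N → Prop) (w : N → N → ℝ) (u v : N) : ℝ :=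
  sInf {c : ℝ | ∃ l : List N, IsWalk E u v l ∧ c = pathWeight w l}

section Aux


variable {N : Type*} (E : N → N → Prop) (w : N → N → ℝ)



lemma pathWeight_nonneg (hw : ∀ u v, 0 ≤ w u v) : ∀ l, 0 ≤ pathWeight w l
  | [] => le_refl _
  | [_] => le_refl _
  | a :: b :: t => add_nonneg (hw a b) (pathWeight_nonneg hw (b :: t))

lemma pathWeight_append (x : N) (b : List N) :
    ∀ a : List N, pathWeight w (a ++ x :: b) = pathWeight w (a ++ [x]) + pathWeight w (x :: b)
  | [] => by simp [pathWeight]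
  | [h] => by simp [pathWeight]
  | h1 :: h2 :: t => by
      have ih := pathWeight_append x b (h2 :: t)
      show w h1 h2 + pathWeight w ((h2 :: t) ++ x :: b)
          = w h1 h2 + pathWeight w ((h2 :: t) ++ [x]) + pathWeight w (x :: b)
      rw [ih]; ring

lemma not_nodup_decomp {α : Type*} {l : List α} (h : ¬l.Nodup) :
    ∃ l1 x l2 l3, l = l1 ++ x :: l2 ++ x :: l3 := by
  induction l with
  | nil => simp at h
  | cons a t ih =>
    by_cases ha : a ∈ t
    · obtain ⟨t1, t2, rfl⟩ := List.append_of_mem ha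
      exact ⟨[], a, t1, t2, rfl⟩
    · have ht : ¬t.Nodup := fun hn => h (List.nodup_cons.2 ⟨ha, hn⟩)
      obtain ⟨l1, x, l2, l3, rfl⟩ := ih ht
      exact ⟨a :: l1, x, l2, l3, rfl⟩

lemma exists_nodup_walk (hw : ∀ u v, 0 ≤ w u v) (u v : N) :
    ∀ (n : ℕ) (l : List N), l.length ≤ n → IsWalk E u v l →
      ∃ l', IsWalk E u v l' ∧ l'.Nodup ∧ pathWeight w l' ≤ pathWeight w l := by
  intro n
  induction n with
  | zero =>
    intro l hl hwalk
    exact absurd hwalk.2.1 (by simp [List.length_eq_zero_iff.1 (Nat.le_zero.1 hl)])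
  | succ n ih =>
    intro l hl hwalk
    by_cases hnd : l.Nodup
    · exact ⟨l, hwalk, hnd, le_refl _⟩
    · obtain ⟨l1, x, l2, l3, rfl⟩ := not_nodup_decomp hnd
      obtain ⟨hc, hh, hlast⟩ := hwalk
      -- the shortened walk
      set l' : List N := l1 ++ x :: l3 with hl'
      have hchain : (l1 ++ x :: l3).Chain' E := by
        unfold List.Chain' at hc ⊢
        rw [show l1 ++ x :: l2 ++ x :: l3 = l1 ++ ((x :: l2) ++ x :: l3) by simp,
          List.isChain_append] at hc
        rw [List.isChain_append]
        refine ⟨hc.1, (List.isChain_append.1 hc.2.1).2.1, ?_⟩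
        intro a ha y hy
        exact hc.2.2 a ha y (by simpa using hy)
      have hhead : (l1 ++ x :: l3).head? = some u := by
        cases l1 <;> simpa using hh
      have hlast' : (l1 ++ x :: l3).getLast? = some v := by
        rw [show l1 ++ x :: l2 ++ x :: l3 = (l1 ++ x :: l2) ++ x :: l3 by simp,
          List.getLast?_append_cons] at hlast
        rw [List.getLast?_append_cons]
        exact hlast
      have hlen : (l1 ++ x :: l3).length ≤ n := by
        have : (l1 ++ x :: l2 ++ x :: l3).length ≤ n + 1 := hl
        simp only [List.length_append, List.length_cons] at this ⊢
        omega
      obtain ⟨l'', hwalk'', hnd'', hle''⟩ := ih (l1 ++ x :: l3) hlen ⟨hchain, hhead, hlast'⟩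
      refine ⟨l'', hwalk'', hnd'', hle''.trans ?_⟩
      have e1 : pathWeight w (l1 ++ x :: l2 ++ x :: l3)
          = pathWeight w (l1 ++ [x]) + pathWeight w (x :: (l2 ++ x :: l3)) := by
        rw [show l1 ++ x :: l2 ++ x :: l3 = l1 ++ x :: (l2 ++ x :: l3) by simp]
        exact pathWeight_append w x _ l1
      have e2 : pathWeight w (x :: (l2 ++ x :: l3))
          = pathWeight w ((x :: l2) ++ [x]) + pathWeight w (x :: l3) := by
        rw [show x :: (l2 ++ x :: l3) = (x :: l2) ++ x :: l3 by simp]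
        exact pathWeight_append w x _ (x :: l2)
      have e3 : pathWeight w (l1 ++ x :: l3)
          = pathWeight w (l1 ++ [x]) + pathWeight w (x :: l3) :=
        pathWeight_append w x _ l1
      have h1 := pathWeight_nonneg w hw ((x :: l2) ++ [x])
      rw [e1, e2, e3]
      linarith


lemma SPW_bdd (hw : ∀ u v, 0 ≤ w u v) (u v : N) :
    BddBelow {c : ℝ | ∃ l : List N, IsWalk E u v l ∧ c = pathWeight w l} :=
  ⟨0, by rintro c ⟨l, -, rfl⟩; exact pathWeight_nonneg w hw l⟩

lemma SPW_le (hw : ∀ u v, 0 ≤ w u v) {u v : N} {l : List N} (h : IsWalk E u v l) :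
    SPW E w u v ≤ pathWeight w l :=
  csInf_le (SPW_bdd E w hw u v) ⟨l, h, rfl⟩

lemma exists_walk_lt (hw : ∀ u v, 0 ≤ w u v) {u v : N} (hne : ∃ l, IsWalk E u v l)
    {ε : ℝ} (hε : 0 < ε) :
    ∃ l, IsWalk E u v l ∧ l.Nodup ∧ pathWeight w l < SPW E w u v + ε := by
  obtain ⟨l0, hl0⟩ := hne
  obtain ⟨a, ⟨l, hl, rfl⟩, hlt⟩ :=
    Real.lt_sInf_add_pos (s := {c : ℝ | ∃ l : List N, IsWalk E u v l ∧ c = pathWeight w l})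
      ⟨pathWeight w l0, l0, hl0, rfl⟩ hε
  obtain ⟨l', h', hnd, hle⟩ := exists_nodup_walk E w hw u v l.length l le_rfl hl
  exact ⟨l', h', hnd, lt_of_le_of_lt hle hlt⟩

end Aux

/-- In the (weighted) augmented layered graph with nonnegative edge weights, the
minimum weight over all STARs for client `c = (s,d,φ)` — a STAR consisting of a
processing location `p`, acyclic paths `σ₁ : s₁ → p₁`, `σ₁' : o₁' → p₁'`,
`σ₂ : p₂ → d₂`, and the processing edges of weight `w_{p₁p₂}` (and zero for
`(p₁',p₂)`) — equals `min_{p∈V} [SPW(s₁,p₁) + SPW(o₁',p₁') + w_{p₁p₂} + SPW(p₂,d₂)]`: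
the exchange between the min over STARs and its decomposition by processing location
(so it is computable by three single-source shortest-path computations followed by a
minimization over the `|V|` processing locations). -/
theorem min_STAR_decomposition {V : Type*} [Fintype V] [Nonempty V]
    (E : ALGNode V → ALGNode V → Prop) (w : ALGNode V → ALGNode V → ℝ)
    (hw : ∀ u v, 0 ≤ w u v)
    (wproc : V → ℝ) (hwproc : ∀ p, wproc p = w (.live p) (.out p))
    (hwproc' : ∀ p, 0 ≤ wproc p)
    (s d : V)
    (hex1 : ∀ p : V, ∃ l, IsWalk E (.live s) (.live p) l ∧ l.Nodup)
    (hex2 : ∀ p : V, ∃ l, IsWalk E .src (.sta p) l ∧ l.Nodup)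
    (hex3 : ∀ p : V, ∃ l, IsWalk E (.out p) (.out d) l ∧ l.Nodup) :
    sInf {c : ℝ | ∃ (p : V) (l1 l1' l2 : List (ALGNode V)),
        IsWalk E (.live s) (.live p) l1 ∧ l1.Nodup ∧
        IsWalk E .src (.sta p) l1' ∧ l1'.Nodup ∧
        IsWalk E (.out p) (.out d) l2 ∧ l2.Nodup ∧
        c = pathWeight w l1 + pathWeight w l1' + wproc p + pathWeight w l2}
      = Finset.univ.inf' Finset.univ_nonempty
          (fun p : V => SPW E w (.live s) (.live p) + SPW E w .src (.sta p)
            + wproc p + SPW E w (.out p) (.out d)) := by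
  set f : V → ℝ := fun p => SPW E w (.live s) (.live p) + SPW E w .src (.sta p)
      + wproc p + SPW E w (.out p) (.out d) with hf
  set S : Set ℝ := {c : ℝ | ∃ (p : V) (l1 l1' l2 : List (ALGNode V)),
        IsWalk E (.live s) (.live p) l1 ∧ l1.Nodup ∧
        IsWalk E .src (.sta p) l1' ∧ l1'.Nodup ∧
        IsWalk E (.out p) (.out d) l2 ∧ l2.Nodup ∧
        c = pathWeight w l1 + pathWeight w l1' + wproc p + pathWeight w l2} with hS
  have hSne : S.Nonempty := by
    obtain ⟨p⟩ := ‹Nonempty V›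
    obtain ⟨l1, h1, h1n⟩ := hex1 p
    obtain ⟨l1', h2, h2n⟩ := hex2 p
    obtain ⟨l2, h3, h3n⟩ := hex3 p
    exact ⟨_, p, l1, l1', l2, h1, h1n, h2, h2n, h3, h3n, rfl⟩
  have hSbdd : BddBelow S := by
    refine ⟨0, ?_⟩
    rintro c ⟨p, l1, l1', l2, h1, -, h2, -, h3, -, rfl⟩
    have := pathWeight_nonneg w hw l1
    have := pathWeight_nonneg w hw l1'
    have := pathWeight_nonneg w hw l2
    have := hwproc' p
    linarith
  apply le_antisymm
  · obtain ⟨p, -, hp⟩ := Finset.exists_mem_eq_inf' (Finset.univ_nonempty) f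
    rw [hp]
    refine le_of_forall_pos_le_add ?_
    intro ε hε
    have hε3 : 0 < ε / 3 := by linarith
    obtain ⟨l1, h1, h1n, hlt1⟩ :=
      exists_walk_lt E w hw ⟨(hex1 p).choose, (hex1 p).choose_spec.1⟩ hε3
    obtain ⟨l1', h2, h2n, hlt2⟩ :=
      exists_walk_lt E w hw ⟨(hex2 p).choose, (hex2 p).choose_spec.1⟩ hε3
    obtain ⟨l2, h3, h3n, hlt3⟩ :=
      exists_walk_lt E w hw ⟨(hex3 p).choose, (hex3 p).choose_spec.1⟩ hε3
    have hmem : pathWeight w l1 + pathWeight w l1' + wproc p + pathWeight w l2 ∈ S :=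
      ⟨p, l1, l1', l2, h1, h1n, h2, h2n, h3, h3n, rfl⟩
    have := csInf_le hSbdd hmem
    simp only [hf]
    linarith
  · refine le_csInf hSne ?_
    rintro c ⟨p, l1, l1', l2, h1, -, h2, -, h3, -, rfl⟩
    refine le_trans (Finset.inf'_le f (Finset.mem_univ p)) ?_
    have e1 := SPW_le E w hw h1
    have e2 := SPW_le E w hw h2
    have e3 := SPW_le E w hw h3
    simp only [hf]
    linarith
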